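/- Define β_k² by β_{2k}² = 12^{−k} and β_{2k+1}² = 12^{−k}/3 for k ≥ 0, and set γ_k = β_k², δ_k² = γ_{k+1}/γ_k. Then ∇³γ_k < 0 for all k ∈ ℕ (indeed ∇³γ_{2k} = −(2/9)·12^{−k} and ∇³γ_{2k+1} = −(23/144)·12^{−k}), but δ_{k+1}² − δ_k² = (−1)^{k+1}/12 for all k, so δ_{k+1}² − δ_k² does not tend to 0. -/

import Mathlib

theorem stmt17 (γ : ℕ → ℝ)
    (hγeven : ∀ k : ℕ, γ (2 * k) = (12 : ℝ)⁻¹ ^ k)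
    (hγodd : ∀ k : ℕ, γ (2 * k + 1) = (12 : ℝ)⁻¹ ^ k / 3) :
    (∀ k : ℕ, γ (k + 3) - 3 * γ (k + 2) + 3 * γ (k + 1) - γ k < 0) ∧
    (∀ k : ℕ, γ (2 * k + 3) - 3 * γ (2 * k + 2) + 3 * γ (2 * k + 1) - γ (2 * k)
      = -(2 / 9) * (12 : ℝ)⁻¹ ^ k) ∧
    (∀ k : ℕ, γ (2 * k + 4) - 3 * γ (2 * k + 3) + 3 * γ (2 * k + 2) - γ (2 * k + 1)
      = -(23 / 144) * (12 : ℝ)⁻¹ ^ k) ∧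
    (∀ k : ℕ, γ (k + 2) / γ (k + 1) - γ (k + 1) / γ k = (-1 : ℝ) ^ (k + 1) / 12) ∧
    ¬ Filter.Tendsto (fun k => γ (k + 2) / γ (k + 1) - γ (k + 1) / γ k)
        Filter.atTop (nhds 0) := by
  have hpos : ∀ m : ℕ, (0 : ℝ) < (12 : ℝ)⁻¹ ^ m := fun m => by positivity
  have h2 : ∀ k : ℕ, γ (2 * k + 3) - 3 * γ (2 * k + 2) + 3 * γ (2 * k + 1) - γ (2 * k)
      = -(2 / 9) * (12 : ℝ)⁻¹ ^ k := by
    intro k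
    have e1 : 2 * k + 3 = 2 * (k + 1) + 1 := by ring
    have e2 : 2 * k + 2 = 2 * (k + 1) := by ring
    rw [e1, e2, hγodd, hγeven, hγodd, hγeven]
    ring
  have h3 : ∀ k : ℕ, γ (2 * k + 4) - 3 * γ (2 * k + 3) + 3 * γ (2 * k + 2) - γ (2 * k + 1)
      = -(23 / 144) * (12 : ℝ)⁻¹ ^ k := by
    intro k
    have e1 : 2 * k + 4 = 2 * (k + 2) := by ring
    have e2 : 2 * k + 3 = 2 * (k + 1) + 1 := by ring
    have e3 : 2 * k + 2 = 2 * (k + 1) := by ring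
    rw [e1, e2, e3, hγeven, hγodd, hγeven, hγodd]
    ring
  have h4 : ∀ k : ℕ, γ (k + 2) / γ (k + 1) - γ (k + 1) / γ k = (-1 : ℝ) ^ (k + 1) / 12 := by
    intro k
    rcases Nat.even_or_odd k with ⟨m, hm⟩ | ⟨m, hm⟩
    · subst hm
      have e0 : m + m = 2 * m := by ring
      have e1 : m + m + 2 = 2 * (m + 1) := by ring
      have e2 : m + m + 1 = 2 * m + 1 := by ring
      rw [e0, e1, e2] at *
      rw [hγeven, hγodd, hγeven]
      have hne : (12 : ℝ)⁻¹ ^ m ≠ 0 := (hpos m).ne'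
      rw [pow_succ]
      field_simp
      ring_nf
      rw [pow_mul']
      norm_num
    · subst hm
      have e1 : 2 * m + 1 + 2 = 2 * (m + 1) + 1 := by ring
      have e2 : 2 * m + 1 + 1 = 2 * (m + 1) := by ring
      rw [e1, e2, hγodd, hγeven, hγodd]
      have hne : (12 : ℝ)⁻¹ ^ m ≠ 0 := (hpos m).ne'
      have hne1 : (12 : ℝ)⁻¹ ^ (m + 1) ≠ 0 := (hpos (m + 1)).ne'
      rw [pow_succ] at *
      field_simp
      ring_nf
      rw [pow_mul']
      norm_num
  refine ⟨?_, h2, h3, h4, ?_⟩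
  · intro k
    rcases Nat.even_or_odd k with ⟨m, hm⟩ | ⟨m, hm⟩
    · subst hm
      have e0 : m + m = 2 * m := by ring
      rw [e0, show 2 * m + 3 = 2 * m + 3 from rfl]
      have := h2 m
      nlinarith [hpos m]
    · subst hm
      have := h3 m
      have e : 2 * m + 1 + 3 = 2 * m + 4 := by ring
      rw [e, show 2 * m + 1 + 2 = 2 * m + 3 from by ring,
        show 2 * m + 1 + 1 = 2 * m + 2 from by ring]
      nlinarith [hpos m]
  · intro h
    have h' : Filter.Tendsto (fun k => ((-1 : ℝ) ^ (k + 1) / 12)) Filter.atTop (nhds 0) := by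
      exact h.congr (fun k => (h4 k))
    have h2' := (h'.comp (Filter.tendsto_atTop_atTop_of_monotone (f := fun n : ℕ => 2 * n)
      (fun _ _ hab => by show 2 * _ ≤ 2 * _; omega) (fun b => ⟨b, by show b ≤ 2 * b; omega⟩)))
    have : Filter.Tendsto (fun _ : ℕ => (-1 : ℝ) / 12) Filter.atTop (nhds 0) := by
      refine h2'.congr fun n => ?_
      simp [Function.comp, pow_succ, pow_mul]
    have := tendsto_nhds_unique this tendsto_const_nhds
    norm_num at this
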